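/- There exist ε0 > 0 and C > 0, depending only on the model constants, such that for every 0 < ε ≤ ε0 and every nonnegative integrable hazard λ on [0,1] with h²(p_λ, p_{λ0}) ≤ ε², one has both H²(λ/∫_0^1 λ, λ0/∫_0^1 λ0) ≤ C·ε² and (∫_0^1 |λ(u) − λ0(u)|du)² ≤ C·ε². -/

import Mathlib

open MeasureTheory Real Set

noncomputable section

/-- Cumulative hazard `Λ(t) = ∫_0^t λ(u) du`. -/
def cumHaz (lam : ℝ → ℝ) (t : ℝ) : ℝ := ∫ u in (0:ℝ)..t, lam u

/-- Survival function `S(t) = exp(−Λ(t))`. -/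
def survF (lam : ℝ → ℝ) (t : ℝ) : ℝ := Real.exp (-(cumHaz lam t))

/-- `Ḡ(u) = 1 - ∫_0^u g(v) dv`. -/
def Gbar (g : ℝ → ℝ) (u : ℝ) : ℝ := 1 - ∫ v in (0:ℝ)..u, g v

/-- Squared Hellinger distance between the censored-data densities associated with the
hazards `lam` and `lam0`, for censoring density `g`. -/
def hellingerSq (g lam0 lam : ℝ → ℝ) : ℝ :=
  (∫ y in (0:ℝ)..1, (Real.sqrt (g y * survF lam y) - Real.sqrt (g y * survF lam0 y)) ^ 2)
    + (∫ y in (0:ℝ)..1,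
        Gbar g y * (Real.sqrt (lam y * survF lam y) - Real.sqrt (lam0 y * survF lam0 y)) ^ 2)
    + Gbar g 1 * (Real.sqrt (survF lam 1) - Real.sqrt (survF lam0 1)) ^ 2


/-- Pseudo-Hellinger squared distance between two nonnegative functions on `[0,1]`:
`H²(λ1,λ2) = ∫_0^1 (√λ1 − √λ2)²`. -/
def HSq (l1 l2 : ℝ → ℝ) : ℝ := ∫ u in (0:ℝ)..1, (Real.sqrt (l1 u) - Real.sqrt (l2 u)) ^ 2



lemma NH_sub_interval {lam : ℝ → ℝ} (hint : IntervalIntegrable lam volume 0 1)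
    {a b : ℝ} (ha : a ∈ Icc (0:ℝ) 1) (hb : b ∈ Icc (0:ℝ) 1) :
    IntervalIntegrable lam volume a b := by
  refine hint.mono_set (uIcc_subset_uIcc ?_ ?_) <;>
    simp [uIcc_of_le (zero_le_one' ℝ)] <;> [exact ha; exact hb]

lemma NH_cumHaz_mono {lam : ℝ → ℝ} (hint : IntervalIntegrable lam volume 0 1)
    (hpos : ∀ u ∈ Icc (0:ℝ) 1, 0 ≤ lam u) :
    ∀ y ∈ Icc (0:ℝ) 1, 0 ≤ cumHaz lam y ∧ cumHaz lam y ≤ cumHaz lam 1 := by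
  intro y hy
  have h0y : IntervalIntegrable lam volume 0 y :=
    NH_sub_interval hint (left_mem_Icc.mpr zero_le_one) hy
  have hy1 : IntervalIntegrable lam volume y 1 :=
    NH_sub_interval hint hy (right_mem_Icc.mpr zero_le_one)
  constructor
  · exact intervalIntegral.integral_nonneg hy.1 (fun u hu => hpos u ⟨hu.1, le_trans hu.2 hy.2⟩)
  · have hadd : cumHaz lam y + ∫ x in y..1, lam x = cumHaz lam 1 :=
      intervalIntegral.integral_add_adjacent_intervals h0y hy1
    have : 0 ≤ ∫ x in y..1, lam x :=
      intervalIntegral.integral_nonneg hy.2 (fun u hu => hpos u ⟨le_trans hy.1 hu.1, hu.2⟩)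
    linarith

lemma NH_survF_bounds {lam : ℝ → ℝ} (hint : IntervalIntegrable lam volume 0 1)
    (hpos : ∀ u ∈ Icc (0:ℝ) 1, 0 ≤ lam u) :
    ∀ y ∈ Icc (0:ℝ) 1, survF lam 1 ≤ survF lam y ∧ survF lam y ≤ 1 := by
  intro y hy
  obtain ⟨h1, h2⟩ := NH_cumHaz_mono hint hpos y hy
  constructor
  · exact Real.exp_le_exp.mpr (by linarith)
  · calc survF lam y ≤ Real.exp 0 := Real.exp_le_exp.mpr (by linarith)
      _ = 1 := Real.exp_zero

lemma NH_cumHaz_le_of_bound {lam : ℝ → ℝ} {c : ℝ} (hc : 0 ≤ c)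
    (hint : IntervalIntegrable lam volume 0 1)
    (hb : ∀ u ∈ Icc (0:ℝ) 1, lam u ≤ c) :
    ∀ y ∈ Icc (0:ℝ) 1, cumHaz lam y ≤ c := by
  intro y hy
  have h0y : IntervalIntegrable lam volume 0 y :=
    NH_sub_interval hint (left_mem_Icc.mpr zero_le_one) hy
  calc cumHaz lam y ≤ ∫ _ in (0:ℝ)..y, c := by
        refine intervalIntegral.integral_mono_on hy.1 h0y (intervalIntegrable_const (c := c)) ?_
        exact fun u hu => hb u ⟨hu.1, le_trans hu.2 hy.2⟩
    _ = c * y := by simp [mul_comm]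
    _ ≤ c := by nlinarith [hy.2]

lemma NH_IccIntegrableOn {lam : ℝ → ℝ} (hint : IntervalIntegrable lam volume 0 1) :
    IntegrableOn lam (Icc (0:ℝ) 1) := by
  have := hint.1
  exact this.congr_set_ae (MeasureTheory.Ioc_ae_eq_Icc).symm |>.congr_set_ae (Filter.EventuallyEq.refl _ _)

lemma NH_survF_cont {lam : ℝ → ℝ} (hint : IntervalIntegrable lam volume 0 1) :
    ContinuousOn (survF lam) (Icc (0:ℝ) 1) := by
  have hInt : IntegrableOn lam (Icc (0:ℝ) 1) := NH_IccIntegrableOn hint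
  have hprim : ContinuousOn (fun x => ∫ t in Ioc (0:ℝ) x, lam t) (Icc 0 1) :=
    intervalIntegral.continuousOn_primitive hInt
  have hcum : ContinuousOn (cumHaz lam) (Icc (0:ℝ) 1) := by
    refine hprim.congr fun x hx => ?_
    simp only [cumHaz, intervalIntegral.integral_of_le hx.1]
  exact Real.continuous_exp.comp_continuousOn hcum.neg

lemma NH_ae_ne_one {s : Set ℝ} : ∀ᵐ y ∂(volume.restrict s), y ≠ (1:ℝ) := by
  refine ae_restrict_of_ae ?_
  rw [ae_iff]
  have : {a : ℝ | ¬ a ≠ 1} = {1} := by ext x; simp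
  rw [this]
  exact measure_singleton 1

lemma NH_ae_Ico : ∀ᵐ y ∂(volume.restrict (Ioc (0:ℝ) 1)), y ∈ Ico (0:ℝ) 1 := by
  filter_upwards [ae_restrict_mem measurableSet_Ioc, NH_ae_ne_one] with y hy hne
  exact ⟨hy.1.le, lt_of_le_of_ne hy.2 hne⟩

lemma NH_g_integrable {g : ℝ → ℝ} {c3 c4 : ℝ} (hc3 : 0 < c3) (hgmeas : Measurable g)
    (hg : ∀ t ∈ Set.Ico (0:ℝ) 1, c3 ≤ g t ∧ g t ≤ c4) :
    IntervalIntegrable g volume 0 1 := by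
  rw [intervalIntegrable_iff_integrableOn_Ioc_of_le zero_le_one]
  refine Integrable.mono' (integrable_const c4) (hgmeas.aestronglyMeasurable.mono_measure
    Measure.restrict_le_self) ?_
  filter_upwards [NH_ae_Ico] with y hy
  have := hg y hy
  rw [Real.norm_eq_abs, abs_le]
  constructor <;> linarith

lemma NH_g_sub_integrable {g : ℝ → ℝ} {c3 c4 : ℝ} (hc3 : 0 < c3) (hgmeas : Measurable g)
    (hg : ∀ t ∈ Set.Ico (0:ℝ) 1, c3 ≤ g t ∧ g t ≤ c4)
    {a b : ℝ} (ha : a ∈ Icc (0:ℝ) 1) (hb : b ∈ Icc (0:ℝ) 1) :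
    IntervalIntegrable g volume a b :=
  NH_sub_interval (NH_g_integrable hc3 hgmeas hg) ha hb

lemma NH_intervalIntegral_g_nonneg {g : ℝ → ℝ} {c3 c4 : ℝ} (hc3 : 0 < c3)
    (hgmeas : Measurable g)
    (hg : ∀ t ∈ Set.Ico (0:ℝ) 1, c3 ≤ g t ∧ g t ≤ c4)
    {a b : ℝ} (ha : a ∈ Icc (0:ℝ) 1) (hb : b ∈ Icc (0:ℝ) 1) (hab : a ≤ b) :
    0 ≤ ∫ v in a..b, g v := by
  rw [intervalIntegral.integral_of_le hab]
  refine integral_nonneg_of_ae ?_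
  filter_upwards [ae_restrict_mem measurableSet_Ioc, NH_ae_ne_one] with y hy hne
  have hy' : y ∈ Ico (0:ℝ) 1 := ⟨(lt_of_le_of_lt ha.1 hy.1).le, lt_of_le_of_ne (hy.2.trans hb.2) hne⟩
  simp only [Pi.zero_apply]
  linarith [(hg y hy').1]

lemma NH_Gbar_bounds {g : ℝ → ℝ} {c3 c4 : ℝ} (hc3 : 0 < c3) (hgmeas : Measurable g)
    (hg : ∀ t ∈ Set.Ico (0:ℝ) 1, c3 ≤ g t ∧ g t ≤ c4) :
    ∀ y ∈ Icc (0:ℝ) 1, Gbar g 1 ≤ Gbar g y ∧ Gbar g y ≤ 1 := by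
  intro y hy
  have h0y := NH_g_sub_integrable hc3 hgmeas hg (left_mem_Icc.mpr zero_le_one) hy
  have hy1 := NH_g_sub_integrable hc3 hgmeas hg hy (right_mem_Icc.mpr zero_le_one)
  have hadd : (∫ v in (0:ℝ)..y, g v) + ∫ v in y..1, g v = ∫ v in (0:ℝ)..1, g v :=
    intervalIntegral.integral_add_adjacent_intervals h0y hy1
  have h1 : 0 ≤ ∫ v in y..1, g v :=
    NH_intervalIntegral_g_nonneg hc3 hgmeas hg hy (right_mem_Icc.mpr zero_le_one) hy.2
  have h2 : 0 ≤ ∫ v in (0:ℝ)..y, g v :=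
    NH_intervalIntegral_g_nonneg hc3 hgmeas hg (left_mem_Icc.mpr zero_le_one) hy hy.1
  constructor <;> simp only [Gbar] <;> linarith


lemma NH_sqrt_exp (t : ℝ) : Real.sqrt (Real.exp t) = Real.exp (t/2) := by
  rw [show Real.exp t = Real.exp (t/2) ^ 2 by rw [pow_two, ← Real.exp_add]; ring_nf]
  exact Real.sqrt_sq (Real.exp_pos _).le

lemma NH_key1 (L L0 S S0 r2 c2 : ℝ) (h1 : 0 ≤ L) (h2 : 0 ≤ L0) (h3 : 0 < r2)
    (h4 : r2 ≤ S) (h50 : 0 ≤ S0) (h6 : L0 ≤ c2) :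
    (Real.sqrt L - Real.sqrt L0)^2 ≤
      (2/r2) * (Real.sqrt (L*S) - Real.sqrt (L0*S0))^2
        + (2*c2/r2) * (Real.sqrt S - Real.sqrt S0)^2 := by
  have hS : 0 ≤ S := le_trans h3.le h4
  rw [Real.sqrt_mul h1, Real.sqrt_mul h2]
  set a := Real.sqrt L; set b := Real.sqrt L0
  set s := Real.sqrt S; set s0 := Real.sqrt S0
  have ha : 0 ≤ a := Real.sqrt_nonneg _
  have hb2 : b^2 = L0 := Real.sq_sqrt h2
  have hs2 : s^2 = S := Real.sq_sqrt hS
  have hmain : r2 * (a - b)^2 ≤ 2*(a*s - b*s0)^2 + 2*c2*(s - s0)^2 := by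
    have h1' : (s*(a-b))^2 ≤ 2*(a*s-b*s0)^2 + 2*b^2*(s-s0)^2 := by nlinarith [sq_nonneg ((a*s - b*s0) - b*(s0 - s)), sq_nonneg ((a*s - b*s0) + b*(s0 - s))]
    have h2' : r2 * (a-b)^2 ≤ (s*(a-b))^2 := by
      have : (s*(a-b))^2 = s^2 * (a-b)^2 := by ring
      rw [this, hs2]; exact mul_le_mul_of_nonneg_right h4 (sq_nonneg _)
    nlinarith [sq_nonneg (s - s0), sq_nonneg b, sq_nonneg (a*s - b*s0), hb2 ▸ h2]
  have : (2/r2) * (a*s - b*s0)^2 + (2*c2/r2) * (s-s0)^2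
      = (2*(a*s - b*s0)^2 + 2*c2*(s - s0)^2) / r2 := by field_simp
  rw [this, le_div_iff₀ h3]
  linarith [hmain]

lemma NH_key2 (L L0 A A0 : ℝ) (h1 : 0 ≤ L) (h2 : 0 ≤ L0) (hA : 0 < A) (hA0 : 0 < A0) :
    (Real.sqrt (L/A) - Real.sqrt (L0/A0))^2 ≤
      (2/A)*(Real.sqrt L - Real.sqrt L0)^2 + 2*L0*(A-A0)^2/(A*A0^2) := by
  rw [Real.sqrt_div h1, Real.sqrt_div h2]
  set a := Real.sqrt L; set b := Real.sqrt L0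
  set sA := Real.sqrt A; set sA0 := Real.sqrt A0
  have hsA : 0 < sA := Real.sqrt_pos.mpr hA
  have hsA0 : 0 < sA0 := Real.sqrt_pos.mpr hA0
  have hA2 : sA^2 = A := Real.sq_sqrt hA.le
  have hA02 : sA0^2 = A0 := Real.sq_sqrt hA0.le
  have hb2 : b^2 = L0 := Real.sq_sqrt h2
  have ha : 0 ≤ a := Real.sqrt_nonneg _
  have hb : 0 ≤ b := Real.sqrt_nonneg _
  -- a/sA - b/sA0 = (a-b)/sA + b*(1/sA - 1/sA0)
  have hdecomp : a/sA - b/sA0 = (a-b)/sA + b*(sA0 - sA)/(sA*sA0) := by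
    field_simp; ring
  have hsq : (a/sA - b/sA0)^2 ≤ 2*((a-b)/sA)^2 + 2*(b*(sA0-sA)/(sA*sA0))^2 := by
    rw [hdecomp]; nlinarith [sq_nonneg ((a-b)/sA - b*(sA0-sA)/(sA*sA0))]
  have h1' : ((a-b)/sA)^2 = (a-b)^2 / A := by rw [div_pow, hA2]
  have hdiff : (sA0 - sA)^2 ≤ (A0 - A)^2 / A0 := by
    have key : (sA0 - sA) * (sA0 + sA) = A0 - A := by nlinarith
    have hsum : A0 ≤ (sA0 + sA)^2 := by nlinarith
    have h := sq_nonneg (sA0 - sA)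
    rw [le_div_iff₀ hA0]
    calc (sA0 - sA)^2 * A0 ≤ (sA0 - sA)^2 * (sA0 + sA)^2 := by
          exact mul_le_mul_of_nonneg_left hsum h
      _ = (A0 - A)^2 := by rw [← mul_pow, key]
  have h2' : (b*(sA0-sA)/(sA*sA0))^2 ≤ L0 * (A-A0)^2 / (A*A0^2) := by
    have : (b*(sA0-sA)/(sA*sA0))^2 = b^2 * (sA0-sA)^2 / (A*A0) := by
      rw [div_pow, mul_pow, mul_pow, hA2, hA02]
    rw [this, hb2]
    rw [div_le_div_iff₀ (by positivity) (by positivity)]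
    have : (A - A0)^2 = (A0 - A)^2 := by ring
    rw [this]
    have := mul_le_mul_of_nonneg_left hdiff h2
    calc L0 * (sA0-sA)^2 * (A*A0^2) = (L0 * (sA0-sA)^2) * (A*A0^2) := by ring
      _ ≤ (L0 * ((A0-A)^2/A0)) * (A*A0^2) := by
          exact mul_le_mul_of_nonneg_right this (by positivity)
      _ = L0 * (A0-A)^2 * (A*A0) := by field_simp
  calc (a/sA - b/sA0)^2 ≤ 2*((a-b)/sA)^2 + 2*(b*(sA0-sA)/(sA*sA0))^2 := hsq
    _ ≤ (2/A)*(a-b)^2 + 2*(L0*(A-A0)^2/(A*A0^2)) := by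
        rw [h1']
        have : 2 * ((a - b) ^ 2 / A) = 2 / A * (a - b) ^ 2 := by ring
        rw [this]
        linarith [h2']
    _ = (2/A)*(a-b)^2 + 2*L0*(A-A0)^2/(A*A0^2) := by ring

lemma NH_sub_sq_le (a b : ℝ) : (a-b)^2 ≤ 2*a^2 + 2*b^2 := by nlinarith [sq_nonneg (a+b)]

lemma NH_add_sq_le (a b : ℝ) : (a+b)^2 ≤ 2*a^2 + 2*b^2 := by nlinarith [sq_nonneg (a-b)]

lemma NH_sq_le (a b : ℝ) : a^2 ≤ 2*(a-b)^2 + 2*b^2 := by nlinarith [sq_nonneg (a - 2*b)]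

lemma NH_key3 (L L0 eps : ℝ) (h1 : 0 ≤ L) (h2 : 0 ≤ L0) (he : 0 < eps) :
    |L - L0| ≤ (1/(2*eps)) * (Real.sqrt L - Real.sqrt L0)^2
      + (eps/2) * (Real.sqrt L + Real.sqrt L0)^2 := by
  set a := Real.sqrt L; set b := Real.sqrt L0
  have ha2 : a^2 = L := Real.sq_sqrt h1
  have hb2 : b^2 = L0 := Real.sq_sqrt h2
  have hab : 0 ≤ a + b := add_nonneg (Real.sqrt_nonneg _) (Real.sqrt_nonneg _)
  have habs : |L - L0| = |a - b| * (a + b) := by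
    rw [← ha2, ← hb2, show a^2 - b^2 = (a-b)*(a+b) by ring, abs_mul, abs_of_nonneg hab]
  rw [habs]
  have key : 2*eps*(|a - b| * (a + b)) ≤ (a-b)^2 + eps^2*(a+b)^2 := by
    nlinarith [sq_nonneg (|a - b| - eps*(a+b)), sq_abs (a-b), abs_nonneg (a-b)]
  have goal_eq : (1/(2*eps)) * (a-b)^2 + (eps/2) * (a+b)^2
      = ((a-b)^2 + eps^2*(a+b)^2)/(2*eps) := by
    field_simp
  rw [goal_eq, le_div_iff₀ (by positivity)]
  nlinarith [key]

lemma NH_aesm_sq {μ : Measure ℝ} {f : ℝ → ℝ} (h : AEStronglyMeasurable f μ) :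
    AEStronglyMeasurable (fun y => (f y)^2) μ := by
  have := h.mul h
  exact this.congr (Filter.Eventually.of_forall fun y => (pow_two (f y)).symm)

set_option maxHeartbeats 1600000 in
/-- A small Hellinger distance between the censored-data densities implies a small
pseudo-Hellinger distance between the renormalised hazards `λ/∫λ` and `λ0/∫λ0`, as well as a
small `L¹`-distance between the hazards, with constants depending only on the model
constants. -/
theorem normalised_hellinger_and_L1_bound
    (lam0 g : ℝ → ℝ) (c1 c2 c3 c4 : ℝ)
    (hc1 : 0 < c1) (hc3 : 0 < c3)
    (hlam0cont : ContinuousOn lam0 (Set.Icc 0 1))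
    (hlam0 : ∀ t ∈ Set.Icc (0:ℝ) 1, c1 ≤ lam0 t ∧ lam0 t ≤ c2)
    (hgmeas : Measurable g)
    (hg : ∀ t ∈ Set.Ico (0:ℝ) 1, c3 ≤ g t ∧ g t ≤ c4)
    (hgint : (∫ v in (0:ℝ)..1, g v) < 1) :
    ∃ ε0 C : ℝ, 0 < ε0 ∧ 0 < C ∧
      ∀ ε : ℝ, 0 < ε → ε ≤ ε0 →
      ∀ lam : ℝ → ℝ, Measurable lam →
        (∀ u ∈ Set.Icc (0:ℝ) 1, 0 ≤ lam u) →
        IntervalIntegrable lam volume 0 1 →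
        hellingerSq g lam0 lam ≤ ε ^ 2 →
        HSq (fun u => lam u / (∫ x in (0:ℝ)..1, lam x))
            (fun u => lam0 u / (∫ x in (0:ℝ)..1, lam0 x)) ≤ C * ε ^ 2 ∧
        (∫ u in (0:ℝ)..1, |lam u - lam0 u|) ^ 2 ≤ C * ε ^ 2 := by
  have h01 : (0:ℝ) ∈ Icc (0:ℝ) 1 := left_mem_Icc.mpr zero_le_one
  have h11 : (1:ℝ) ∈ Icc (0:ℝ) 1 := right_mem_Icc.mpr zero_le_one
  have hc2 : 0 < c2 := lt_of_lt_of_le hc1 ((hlam0 0 h01).1.trans (hlam0 0 h01).2)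
  set G1 := Gbar g 1 with hG1def
  have hG1 : 0 < G1 := by rw [hG1def]; simp only [Gbar]; linarith only [hgint]
  set r2 := Real.exp (-c2) / 4 with hr2def
  have hr2 : 0 < r2 := by rw [hr2def]; positivity
  set K1 := 2 / r2 / G1 + 2 * c2 / r2 / c3 with hK1def
  have hK1 : 0 < K1 := by rw [hK1def]; positivity
  set c5 := (K1 + (4*K1 + 6*c2)) / 2 with hc5def
  have hc5 : 0 < c5 := by rw [hc5def]; positivity
  set C := 4*K1/c1 + 4*c5^2/c1^2 + c5^2 + 1 with hCdef
  have hC : 0 < C := by rw [hCdef]; positivity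
  refine ⟨min 1 (min (Real.sqrt G1 * Real.exp (-(c2/2)) / 2) (c1 / (2*c5))), C,
    lt_min one_pos (lt_min (div_pos (mul_pos (Real.sqrt_pos.mpr hG1) (Real.exp_pos _)) two_pos)
      (div_pos hc1 (by positivity))), hC, ?_⟩
  intro ε hε hεle lam hmeas hpos hint hH
  have hε1 : ε ≤ 1 := hεle.trans (min_le_left _ _)
  have hεG : ε ≤ Real.sqrt G1 * Real.exp (-(c2/2)) / 2 :=
    hεle.trans ((min_le_right _ _).trans (min_le_left _ _))
  have hεc5 : ε ≤ c1 / (2*c5) := hεle.trans ((min_le_right _ _).trans (min_le_right _ _))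
  -- basic integrability of lam0
  have h0int : IntervalIntegrable lam0 volume 0 1 :=
    ContinuousOn.intervalIntegrable (by rw [uIcc_of_le (zero_le_one' ℝ)]; exact hlam0cont)
  have hlam0pos : ∀ u ∈ Icc (0:ℝ) 1, 0 ≤ lam0 u := fun u hu => hc1.le.trans (hlam0 u hu).1
  set A0 := ∫ x in (0:ℝ)..1, lam0 x with hA0def
  have hA0up : A0 ≤ c2 :=
    NH_cumHaz_le_of_bound hc2.le h0int (fun u hu => (hlam0 u hu).2) 1 h11
  have hA0low : c1 ≤ A0 := by
    have : (∫ _ in (0:ℝ)..1, c1) ≤ A0 := by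
      refine intervalIntegral.integral_mono_on zero_le_one
        (intervalIntegrable_const (c := c1)) h0int (fun u hu => (hlam0 u hu).1)
    simpa using this
  have hA0pos : 0 < A0 := lt_of_lt_of_le hc1 hA0low
  -- survival function bounds
  have hcum0 := NH_cumHaz_le_of_bound hc2.le h0int (fun u hu => (hlam0 u hu).2)
  have hcum0n := NH_cumHaz_mono h0int hlam0pos
  have hS0b : ∀ y ∈ Icc (0:ℝ) 1, Real.exp (-c2) ≤ survF lam0 y ∧ survF lam0 y ≤ 1 := by
    intro y hy
    constructor
    · exact Real.exp_le_exp.mpr (by linarith only [hcum0 y hy])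
    · calc survF lam0 y ≤ Real.exp 0 := Real.exp_le_exp.mpr (by linarith only [(hcum0n y hy).1])
        _ = 1 := Real.exp_zero
  have hSb := NH_survF_bounds hint hpos
  have hGb := NH_Gbar_bounds hc3 hgmeas hg
  -- measure and a.e. facts
  set μ := volume.restrict (Ioc (0:ℝ) 1) with hμdef
  have haeIcc : ∀ᵐ y ∂μ, y ∈ Icc (0:ℝ) 1 :=
    (ae_restrict_mem measurableSet_Ioc).mono (fun y hy => ⟨hy.1.le, hy.2⟩)
  have haeIco : ∀ᵐ y ∂μ, y ∈ Ico (0:ℝ) 1 := NH_ae_Ico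
  -- measurability over μ
  have hScont := NH_survF_cont hint
  have hS0cont := NH_survF_cont h0int
  have hresle : μ ≤ volume.restrict (Icc (0:ℝ) 1) :=
    Measure.restrict_mono Ioc_subset_Icc_self le_rfl
  have hmS : AEStronglyMeasurable (survF lam) μ :=
    (hScont.aestronglyMeasurable measurableSet_Icc).mono_measure hresle
  have hmS0 : AEStronglyMeasurable (survF lam0) μ :=
    (hS0cont.aestronglyMeasurable measurableSet_Icc).mono_measure hresle
  have hmlam : AEStronglyMeasurable lam μ :=
    hmeas.aestronglyMeasurable.mono_measure Measure.restrict_le_self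
  have hmlam0 : AEStronglyMeasurable lam0 μ :=
    (hlam0cont.aestronglyMeasurable measurableSet_Icc).mono_measure hresle
  have hmg : AEStronglyMeasurable g μ :=
    hgmeas.aestronglyMeasurable.mono_measure Measure.restrict_le_self
  have sqc : Continuous Real.sqrt := Real.continuous_sqrt
  -- integrable basic functions
  have hIlam : Integrable lam μ := hint.1
  have hIlam0 : Integrable lam0 μ :=
    (hlam0cont.integrableOn_Icc).mono_set Ioc_subset_Icc_self
  have hIbound : Integrable (fun y => 2 * lam y + 2*c2) μ :=
    (hIlam.const_mul 2).add (integrable_const _)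
  -- named integrands
  set f0 : ℝ → ℝ := fun y =>
    (Real.sqrt (g y * survF lam y) - Real.sqrt (g y * survF lam0 y))^2 with hf0def
  set f2 : ℝ → ℝ := fun y =>
    (Real.sqrt (lam y * survF lam y) - Real.sqrt (lam0 y * survF lam0 y))^2 with hf2def
  set f3 : ℝ → ℝ := fun y => (Real.sqrt (lam y) - Real.sqrt (lam0 y))^2 with hf3def
  set q1 : ℝ → ℝ := fun y => (Real.sqrt (survF lam y) - Real.sqrt (survF lam0 y))^2 with hq1def
  -- integrability of the integrands
  have hIq1 : Integrable q1 μ := by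
    refine IntegrableOn.mono_set (ContinuousOn.integrableOn_Icc ?_) Ioc_subset_Icc_self
    exact (((sqc.comp_continuousOn hScont).sub (sqc.comp_continuousOn hS0cont)).pow 2)
  have hmf0 : AEStronglyMeasurable f0 μ := by
    exact NH_aesm_sq ((sqc.comp_aestronglyMeasurable (hmg.mul hmS)).sub
      (sqc.comp_aestronglyMeasurable (hmg.mul hmS0)))
  have hmf2 : AEStronglyMeasurable f2 μ := by
    exact NH_aesm_sq ((sqc.comp_aestronglyMeasurable (hmlam.mul hmS)).sub
      (sqc.comp_aestronglyMeasurable (hmlam0.mul hmS0)))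
  have hmf3 : AEStronglyMeasurable f3 μ := by
    exact NH_aesm_sq ((sqc.comp_aestronglyMeasurable hmlam).sub
      (sqc.comp_aestronglyMeasurable hmlam0))
  have hf2bound : ∀ᵐ y ∂μ, 0 ≤ f2 y ∧ f2 y ≤ 2 * lam y + 2*c2 := by
    filter_upwards [haeIcc] with y hy
    refine ⟨sq_nonneg _, ?_⟩
    have h1 : Real.sqrt (lam y * survF lam y) ^ 2 = lam y * survF lam y :=
      Real.sq_sqrt (mul_nonneg (hpos y hy) (Real.exp_pos _).le)
    have h2 : Real.sqrt (lam0 y * survF lam0 y) ^ 2 = lam0 y * survF lam0 y :=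
      Real.sq_sqrt (mul_nonneg (hlam0pos y hy) (Real.exp_pos _).le)
    have h3 : lam y * survF lam y ≤ lam y := by
      have := mul_le_mul_of_nonneg_left (hSb y hy).2 (hpos y hy); simpa using this
    have h4 : lam0 y * survF lam0 y ≤ c2 := by
      have := mul_le_mul (hlam0 y hy).2 (hS0b y hy).2 (Real.exp_pos _).le hc2.le
      simpa using this
    simp only [hf2def]
    have hkey := NH_sub_sq_le (Real.sqrt (lam y * survF lam y))
      (Real.sqrt (lam0 y * survF lam0 y))
    rw [h1, h2] at hkey
    linarith only [hkey, h3, h4]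
  have hIf2 : Integrable f2 μ := by
    refine Integrable.mono' hIbound hmf2 ?_
    filter_upwards [hf2bound] with y hy
    rw [Real.norm_eq_abs, abs_of_nonneg hy.1]; exact hy.2
  have hIf3 : Integrable f3 μ := by
    refine Integrable.mono' hIbound hmf3 ?_
    filter_upwards [haeIcc] with y hy
    have h1 : Real.sqrt (lam y) ^ 2 = lam y := Real.sq_sqrt (hpos y hy)
    have h2 : Real.sqrt (lam0 y) ^ 2 = lam0 y := Real.sq_sqrt (hlam0pos y hy)
    rw [Real.norm_eq_abs, abs_of_nonneg (sq_nonneg _)]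
    simp only [hf3def]
    have hkey := NH_sub_sq_le (Real.sqrt (lam y)) (Real.sqrt (lam0 y))
    rw [h1, h2] at hkey
    linarith only [hkey, (hlam0 y hy).2]
  have hIf0 : Integrable f0 μ := by
    refine Integrable.mono' (integrable_const (4*c4)) hmf0 ?_
    filter_upwards [haeIco] with y hy
    have hgy := hg y hy
    have hyIcc : y ∈ Icc (0:ℝ) 1 := ⟨hy.1, hy.2.le⟩
    have h1 : Real.sqrt (g y * survF lam y) ^ 2 = g y * survF lam y :=
      Real.sq_sqrt (mul_nonneg (le_trans hc3.le hgy.1) (Real.exp_pos _).le)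
    have h2 : Real.sqrt (g y * survF lam0 y) ^ 2 = g y * survF lam0 y :=
      Real.sq_sqrt (mul_nonneg (le_trans hc3.le hgy.1) (Real.exp_pos _).le)
    have h3 : g y * survF lam y ≤ c4 := by
      have := mul_le_mul hgy.2 (hSb y hyIcc).2 (Real.exp_pos _).le
        (le_trans hgy.1 hgy.2 |>.trans' (le_of_lt hc3) |> fun _ => le_trans hc3.le (hgy.1.trans hgy.2))
      simpa using mul_le_mul hgy.2 (hSb y hyIcc).2 (Real.exp_pos _).le
        (le_trans hc3.le (hgy.1.trans hgy.2))
    have h4 : g y * survF lam0 y ≤ c4 := by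
      simpa using mul_le_mul hgy.2 (hS0b y hyIcc).2 (Real.exp_pos _).le
        (le_trans hc3.le (hgy.1.trans hgy.2))
    rw [Real.norm_eq_abs, abs_of_nonneg (sq_nonneg _)]
    simp only [hf0def]
    have hkey := NH_sub_sq_le (Real.sqrt (g y * survF lam y)) (Real.sqrt (g y * survF lam0 y))
    rw [h1, h2] at hkey
    linarith only [hkey, h3, h4]
  have hIGf2 : Integrable (fun y => Gbar g y * f2 y) μ := by
    have hmGbar : AEStronglyMeasurable (Gbar g) μ := by
      have : ContinuousOn (Gbar g) (Icc (0:ℝ) 1) := by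
        have hprim : ContinuousOn (fun x => ∫ t in Ioc (0:ℝ) x, g t) (Icc 0 1) :=
          intervalIntegral.continuousOn_primitive
            (NH_IccIntegrableOn (NH_g_integrable hc3 hgmeas hg))
        have : ContinuousOn (fun x => (1:ℝ) - ∫ t in Ioc (0:ℝ) x, g t) (Icc 0 1) :=
          (continuousOn_const).sub hprim
        refine this.congr fun x hx => ?_
        simp only [Gbar, intervalIntegral.integral_of_le hx.1]
      exact (this.aestronglyMeasurable measurableSet_Icc).mono_measure hresle
    refine Integrable.mono' hIbound (hmGbar.mul hmf2) ?_
    filter_upwards [haeIcc, hf2bound] with y hy hb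
    rw [Real.norm_eq_abs, abs_mul, abs_of_nonneg hb.1,
      abs_of_nonneg (le_trans hG1.le (hGb y hy).1)]
    calc Gbar g y * f2 y ≤ 1 * f2 y :=
          mul_le_mul_of_nonneg_right (hGb y hy).2 hb.1
      _ = f2 y := one_mul _
      _ ≤ 2 * lam y + 2*c2 := hb.2
  -- decompose hellingerSq
  have hT1nn : 0 ≤ ∫ y in (0:ℝ)..1, f0 y :=
    intervalIntegral.integral_nonneg zero_le_one (fun u _ => sq_nonneg _)
  have hT2nn : 0 ≤ ∫ y in (0:ℝ)..1, Gbar g y * f2 y :=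
    intervalIntegral.integral_nonneg zero_le_one
      (fun u hu => mul_nonneg (le_trans hG1.le (hGb u hu).1) (sq_nonneg _))
  have hT3nn : 0 ≤ G1 * (Real.sqrt (survF lam 1) - Real.sqrt (survF lam0 1))^2 :=
    mul_nonneg hG1.le (sq_nonneg _)
  have hHsplit : (∫ y in (0:ℝ)..1, f0 y) + (∫ y in (0:ℝ)..1, Gbar g y * f2 y)
      + G1 * (Real.sqrt (survF lam 1) - Real.sqrt (survF lam0 1))^2 ≤ ε^2 := by
    have h := hH
    rw [hellingerSq] at h
    exact h
  have hT1 : (∫ y in (0:ℝ)..1, f0 y) ≤ ε^2 := by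
    linarith only [hHsplit, hT2nn, hT3nn]
  have hT2 : (∫ y in (0:ℝ)..1, Gbar g y * f2 y) ≤ ε^2 := by
    linarith only [hHsplit, hT1nn, hT3nn]
  have hT3 : G1 * (Real.sqrt (survF lam 1) - Real.sqrt (survF lam0 1))^2 ≤ ε^2 := by
    linarith only [hHsplit, hT1nn, hT2nn]
  -- Step 1 : lower bound on survF lam
  have hS1 : r2 ≤ survF lam 1 := by
    have h1 : (Real.sqrt (survF lam 1) - Real.sqrt (survF lam0 1))^2 ≤ ε^2 / G1 :=
      (le_div_iff₀ hG1).mpr (by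
        linarith only [hT3, mul_comm G1 ((Real.sqrt (survF lam 1) - Real.sqrt (survF lam0 1))^2)])
    have habs : |Real.sqrt (survF lam 1) - Real.sqrt (survF lam0 1)| ≤ ε / Real.sqrt G1 := by
      have := Real.sqrt_le_sqrt h1
      rwa [Real.sqrt_sq_eq_abs, Real.sqrt_div (sq_nonneg ε), Real.sqrt_sq hε.le] at this
    have hεsmall : ε / Real.sqrt G1 ≤ Real.exp (-(c2/2)) / 2 := by
      rw [div_le_iff₀ (Real.sqrt_pos.mpr hG1)]
      calc ε ≤ Real.sqrt G1 * Real.exp (-(c2/2)) / 2 := hεG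
        _ = Real.exp (-(c2/2)) / 2 * Real.sqrt G1 := by ring
    have hS01 : Real.exp (-(c2/2)) ≤ Real.sqrt (survF lam0 1) := by
      rw [survF, NH_sqrt_exp]
      exact Real.exp_le_exp.mpr (by linarith only [hcum0 1 h11])
    have hfin : Real.exp (-(c2/2)) / 2 ≤ Real.sqrt (survF lam 1) := by
      have h := abs_le.mp habs
      linarith only [h.1, hS01, hεsmall]
    calc r2 = (Real.exp (-(c2/2)) / 2)^2 := by
          rw [hr2def, div_pow, pow_two, ← Real.exp_add]; norm_num; ring_nf
      _ ≤ (Real.sqrt (survF lam 1))^2 :=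
          pow_le_pow_left₀ (by positivity) hfin 2
      _ = survF lam 1 := Real.sq_sqrt (by rw [survF]; positivity)
  have hSlow : ∀ y ∈ Icc (0:ℝ) 1, r2 ≤ survF lam y := fun y hy => hS1.trans (hSb y hy).1
  -- Step 2 : from T1, bound on ∫ q1
  have hI1 : (∫ y, q1 y ∂μ) ≤ ε^2 / c3 := by
    have hpt : ∀ᵐ y ∂μ, c3 * q1 y ≤ f0 y := by
      filter_upwards [haeIco] with y hy
      have hgy := hg y hy
      have hgnn : 0 ≤ g y := le_trans hc3.le hgy.1
      simp only [hf0def, hq1def, Real.sqrt_mul hgnn]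
      have expand : (Real.sqrt (g y) * Real.sqrt (survF lam y)
          - Real.sqrt (g y) * Real.sqrt (survF lam0 y))^2
          = Real.sqrt (g y)^2 * (Real.sqrt (survF lam y) - Real.sqrt (survF lam0 y))^2 := by
        ring
      rw [expand, Real.sq_sqrt hgnn]
      exact mul_le_mul_of_nonneg_right hgy.1 (sq_nonneg _)
    have hmono : (∫ y, c3 * q1 y ∂μ) ≤ ∫ y, f0 y ∂μ :=
      integral_mono_ae (hIq1.const_mul c3) hIf0 hpt
    rw [MeasureTheory.integral_const_mul] at hmono
    have hT1' : (∫ y, f0 y ∂μ) ≤ ε^2 := by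
      rwa [intervalIntegral.integral_of_le zero_le_one] at hT1
    rw [le_div_iff₀ hc3]
    calc (∫ y, q1 y ∂μ) * c3 = c3 * ∫ y, q1 y ∂μ := by ring
      _ ≤ ε^2 := hmono.trans hT1'
  -- Step 3 : from T2, bound on ∫ f2
  have hI2 : (∫ y, f2 y ∂μ) ≤ ε^2 / G1 := by
    have hpt : ∀ᵐ y ∂μ, G1 * f2 y ≤ Gbar g y * f2 y := by
      filter_upwards [haeIcc, hf2bound] with y hy hb
      exact mul_le_mul_of_nonneg_right (hGb y hy).1 hb.1
    have hmono : (∫ y, G1 * f2 y ∂μ) ≤ ∫ y, Gbar g y * f2 y ∂μ :=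
      integral_mono_ae (hIf2.const_mul G1) hIGf2 hpt
    rw [MeasureTheory.integral_const_mul] at hmono
    have hT2' : (∫ y, Gbar g y * f2 y ∂μ) ≤ ε^2 := by
      rwa [intervalIntegral.integral_of_le zero_le_one] at hT2
    rw [le_div_iff₀ hG1]
    calc (∫ y, f2 y ∂μ) * G1 = G1 * ∫ y, f2 y ∂μ := by ring
      _ ≤ ε^2 := hmono.trans hT2'
  -- Step 4 : H² bound
  have hH2 : (∫ y, f3 y ∂μ) ≤ K1 * ε^2 := by
    have hpt : ∀ᵐ y ∂μ, f3 y ≤ (2/r2) * f2 y + (2*c2/r2) * q1 y := by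
      filter_upwards [haeIcc] with y hy
      exact NH_key1 (lam y) (lam0 y) (survF lam y) (survF lam0 y) r2 c2
        (hpos y hy) (hlam0pos y hy) hr2 (hSlow y hy) (Real.exp_pos _).le (hlam0 y hy).2
    have hIrhs : Integrable (fun y => (2/r2) * f2 y + (2*c2/r2) * q1 y) μ :=
      (hIf2.const_mul _).add (hIq1.const_mul _)
    have hmono : (∫ y, f3 y ∂μ) ≤ ∫ y, (2/r2) * f2 y + (2*c2/r2) * q1 y ∂μ :=
      integral_mono_ae hIf3 hIrhs hpt
    have hval : (∫ y, (2/r2) * f2 y + (2*c2/r2) * q1 y ∂μ)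
        = (2/r2) * (∫ y, f2 y ∂μ) + (2*c2/r2) * (∫ y, q1 y ∂μ) := by
      rw [integral_add (hIf2.const_mul _) (hIq1.const_mul _),
        MeasureTheory.integral_const_mul, MeasureTheory.integral_const_mul]
    rw [hval] at hmono
    have h1 : (2/r2) * ∫ y, f2 y ∂μ ≤ (2/r2) * (ε^2 / G1) :=
      mul_le_mul_of_nonneg_left hI2 (by positivity)
    have h2 : (2*c2/r2) * ∫ y, q1 y ∂μ ≤ (2*c2/r2) * (ε^2 / c3) :=
      mul_le_mul_of_nonneg_left hI1 (by positivity)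
    have heq : (2/r2) * (ε^2 / G1) + (2*c2/r2) * (ε^2 / c3) = K1 * ε^2 := by
      rw [hK1def]; field_simp
    calc (∫ y, f3 y ∂μ) ≤ (2/r2) * (∫ y, f2 y ∂μ) + (2*c2/r2) * (∫ y, q1 y ∂μ) := hmono
      _ ≤ (2/r2) * (ε^2 / G1) + (2*c2/r2) * (ε^2 / c3) := add_le_add h1 h2
      _ = K1 * ε^2 := heq
  -- Step 5 : bound on A = ∫ lam
  set A := ∫ x in (0:ℝ)..1, lam x with hAdef
  have hAμ : A = ∫ y, lam y ∂μ := intervalIntegral.integral_of_le zero_le_one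
  have hA0μ : A0 = ∫ y, lam0 y ∂μ := intervalIntegral.integral_of_le zero_le_one
  have hAup : A ≤ 2*K1*ε^2 + 2*c2 := by
    have hpt : ∀ᵐ y ∂μ, lam y ≤ 2 * f3 y + 2 * lam0 y := by
      filter_upwards [haeIcc] with y hy
      have h1 : Real.sqrt (lam y) ^ 2 = lam y := Real.sq_sqrt (hpos y hy)
      have h2 : Real.sqrt (lam0 y) ^ 2 = lam0 y := Real.sq_sqrt (hlam0pos y hy)
      simp only [hf3def]
      have hkey := NH_sq_le (Real.sqrt (lam y)) (Real.sqrt (lam0 y))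
      rw [h1, h2] at hkey
      linarith only [hkey]
    have hIrhs : Integrable (fun y => 2 * f3 y + 2 * lam0 y) μ :=
      (hIf3.const_mul _).add (hIlam0.const_mul _)
    have hmono : (∫ y, lam y ∂μ) ≤ ∫ y, 2 * f3 y + 2 * lam0 y ∂μ :=
      integral_mono_ae hIlam hIrhs hpt
    have hval : (∫ y, 2 * f3 y + 2 * lam0 y ∂μ)
        = 2 * (∫ y, f3 y ∂μ) + 2 * (∫ y, lam0 y ∂μ) := by
      rw [integral_add (hIf3.const_mul _) (hIlam0.const_mul _),
        MeasureTheory.integral_const_mul, MeasureTheory.integral_const_mul]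
    rw [hval] at hmono
    rw [hAμ]
    have hl0 : (∫ y, lam0 y ∂μ) ≤ c2 := hA0μ ▸ hA0up
    linarith only [hH2, hmono, hl0]
  have hε2 : ε^2 ≤ 1 := by
    calc ε^2 ≤ 1^2 := pow_le_pow_left₀ hε.le hε1 2
      _ = 1 := one_pow 2
  have hAup' : A ≤ 2*K1 + 2*c2 := by
    have h1 : 2*K1*ε^2 ≤ 2*K1 := by
      calc 2*K1*ε^2 ≤ 2*K1*1 := mul_le_mul_of_nonneg_left hε2 (by linarith only [hK1])
        _ = 2*K1 := mul_one _
    linarith only [hAup, h1]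
  -- Step 6 : bound on ∫ (√lam + √lam0)²
  have hIs : Integrable (fun y => (Real.sqrt (lam y) + Real.sqrt (lam0 y))^2) μ := by
    refine Integrable.mono' hIbound (((sqc.comp_aestronglyMeasurable hmlam).add
      (sqc.comp_aestronglyMeasurable hmlam0)).pow _) ?_
    filter_upwards [haeIcc] with y hy
    have h1 : Real.sqrt (lam y) ^ 2 = lam y := Real.sq_sqrt (hpos y hy)
    have h2 : Real.sqrt (lam0 y) ^ 2 = lam0 y := Real.sq_sqrt (hlam0pos y hy)
    rw [Real.norm_eq_abs, abs_of_nonneg (sq_nonneg _)]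
    have hkey := NH_add_sq_le (Real.sqrt (lam y)) (Real.sqrt (lam0 y))
    rw [h1, h2] at hkey
    linarith only [hkey, (hlam0 y hy).2]
  have hGsum : (∫ y, (Real.sqrt (lam y) + Real.sqrt (lam0 y))^2 ∂μ) ≤ 4*K1 + 6*c2 := by
    have hpt : ∀ᵐ y ∂μ, (Real.sqrt (lam y) + Real.sqrt (lam0 y))^2 ≤ 2 * lam y + 2 * lam0 y := by
      filter_upwards [haeIcc] with y hy
      have h1 : Real.sqrt (lam y) ^ 2 = lam y := Real.sq_sqrt (hpos y hy)
      have h2 : Real.sqrt (lam0 y) ^ 2 = lam0 y := Real.sq_sqrt (hlam0pos y hy)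
      have hkey := NH_add_sq_le (Real.sqrt (lam y)) (Real.sqrt (lam0 y))
      rw [h1, h2] at hkey
      linarith only [hkey]
    have hIrhs : Integrable (fun y => 2 * lam y + 2 * lam0 y) μ :=
      (hIlam.const_mul _).add (hIlam0.const_mul _)
    have hmono : (∫ y, (Real.sqrt (lam y) + Real.sqrt (lam0 y))^2 ∂μ)
        ≤ ∫ y, 2 * lam y + 2 * lam0 y ∂μ := integral_mono_ae hIs hIrhs hpt
    have hval : (∫ y, 2 * lam y + 2 * lam0 y ∂μ)
        = 2 * (∫ y, lam y ∂μ) + 2 * (∫ y, lam0 y ∂μ) := by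
      rw [integral_add (hIlam.const_mul _) (hIlam0.const_mul _),
        MeasureTheory.integral_const_mul, MeasureTheory.integral_const_mul]
    rw [hval] at hmono
    have h1 : (∫ y, lam y ∂μ) ≤ 2*K1 + 2*c2 := hAμ ▸ hAup'
    have h2 : (∫ y, lam0 y ∂μ) ≤ c2 := hA0μ ▸ hA0up
    linarith only [hmono, h1, h2]
  -- Step 7 : L¹ bound
  have hIabs : Integrable (fun y => |lam y - lam0 y|) μ := (hIlam.sub hIlam0).abs
  have hP : (∫ y, |lam y - lam0 y| ∂μ) ≤ c5 * ε := by
    have hpt : ∀ᵐ y ∂μ, |lam y - lam0 y| ≤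
        (1/(2*ε)) * f3 y + (ε/2) * (Real.sqrt (lam y) + Real.sqrt (lam0 y))^2 := by
      filter_upwards [haeIcc] with y hy
      exact NH_key3 (lam y) (lam0 y) ε (hpos y hy) (hlam0pos y hy) hε
    have hIrhs : Integrable (fun y =>
        (1/(2*ε)) * f3 y + (ε/2) * (Real.sqrt (lam y) + Real.sqrt (lam0 y))^2) μ :=
      (hIf3.const_mul _).add (hIs.const_mul _)
    have hmono : (∫ y, |lam y - lam0 y| ∂μ) ≤ ∫ y,
        (1/(2*ε)) * f3 y + (ε/2) * (Real.sqrt (lam y) + Real.sqrt (lam0 y))^2 ∂μ :=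
      integral_mono_ae hIabs hIrhs hpt
    have hval : (∫ y, (1/(2*ε)) * f3 y
          + (ε/2) * (Real.sqrt (lam y) + Real.sqrt (lam0 y))^2 ∂μ)
        = (1/(2*ε)) * (∫ y, f3 y ∂μ)
          + (ε/2) * (∫ y, (Real.sqrt (lam y) + Real.sqrt (lam0 y))^2 ∂μ) := by
      rw [integral_add (hIf3.const_mul _) (hIs.const_mul _),
        MeasureTheory.integral_const_mul, MeasureTheory.integral_const_mul]
    rw [hval] at hmono
    have h1 : (1/(2*ε)) * (∫ y, f3 y ∂μ) ≤ (1/(2*ε)) * (K1 * ε^2) :=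
      mul_le_mul_of_nonneg_left hH2 (by positivity)
    have h2 : (ε/2) * (∫ y, (Real.sqrt (lam y) + Real.sqrt (lam0 y))^2 ∂μ)
        ≤ (ε/2) * (4*K1 + 6*c2) := mul_le_mul_of_nonneg_left hGsum (by positivity)
    have heq : (1/(2*ε)) * (K1 * ε^2) + (ε/2) * (4*K1 + 6*c2) = c5 * ε := by
      rw [hc5def]; field_simp
    linarith only [hmono, h1, h2, heq]
  have hPnn : 0 ≤ ∫ y, |lam y - lam0 y| ∂μ := integral_nonneg (fun y => abs_nonneg _)
  have hL1 : (∫ u in (0:ℝ)..1, |lam u - lam0 u|) ^ 2 ≤ C * ε ^ 2 := by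
    rw [intervalIntegral.integral_of_le zero_le_one]
    calc (∫ y, |lam y - lam0 y| ∂μ)^2 ≤ (c5 * ε)^2 := pow_le_pow_left₀ hPnn hP 2
      _ = c5^2 * ε^2 := by ring
      _ ≤ C * ε^2 := by
          refine mul_le_mul_of_nonneg_right ?_ (sq_nonneg _)
          rw [hCdef]
          have h1 : (0:ℝ) ≤ 4*K1/c1 := by positivity
          have h2 : (0:ℝ) ≤ 4*c5^2/c1^2 := by positivity
          linarith only [h1, h2]
  -- Step 8 : lower bound on A
  have hAdiff : |A - A0| ≤ c5 * ε := by
    rw [hAμ, hA0μ, ← integral_sub hIlam hIlam0]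
    calc |∫ y, lam y - lam0 y ∂μ| = ‖∫ y, lam y - lam0 y ∂μ‖ := (Real.norm_eq_abs _).symm
      _ ≤ ∫ y, ‖lam y - lam0 y‖ ∂μ := norm_integral_le_integral_norm _
      _ = ∫ y, |lam y - lam0 y| ∂μ := by simp [Real.norm_eq_abs]
      _ ≤ c5 * ε := hP
  have hAc5 : c5 * ε ≤ c1/2 := by
    rw [le_div_iff₀ (by positivity : (0:ℝ) < 2*c5)] at hεc5
    linarith only [hεc5]
  have hAlow : c1/2 ≤ A := by
    have h := abs_le.mp hAdiff
    linarith only [h.1, hA0low, hAc5]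
  have hApos : 0 < A := lt_of_lt_of_le (by positivity) hAlow
  -- Step 9 : HSq bound
  have hHSq : HSq (fun u => lam u / A) (fun u => lam0 u / A0) ≤ C * ε ^ 2 := by
    rw [HSq, intervalIntegral.integral_of_le zero_le_one]
    set f4 : ℝ → ℝ := fun y => (Real.sqrt (lam y / A) - Real.sqrt (lam0 y / A0))^2 with hf4def
    have hdivA : AEStronglyMeasurable (fun y => lam y / A) μ := by
      have : (fun y => lam y / A) = fun y => (1/A) * lam y := by funext y; ring
      rw [this]; exact aestronglyMeasurable_const.mul hmlam
    have hdivA0 : AEStronglyMeasurable (fun y => lam0 y / A0) μ := by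
      have : (fun y => lam0 y / A0) = fun y => (1/A0) * lam0 y := by funext y; ring
      rw [this]; exact aestronglyMeasurable_const.mul hmlam0
    have hmf4 : AEStronglyMeasurable f4 μ :=
      NH_aesm_sq ((sqc.comp_aestronglyMeasurable hdivA).sub
        (sqc.comp_aestronglyMeasurable hdivA0))
    have hbnd : Integrable (fun y => (2/A) * lam y + (2/A0) * lam0 y) μ :=
      (hIlam.const_mul _).add (hIlam0.const_mul _)
    have hIf4 : Integrable f4 μ := by
      refine Integrable.mono' hbnd hmf4 ?_
      filter_upwards [haeIcc] with y hy
      have h1 : Real.sqrt (lam y / A) ^ 2 = lam y / A :=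
        Real.sq_sqrt (div_nonneg (hpos y hy) hApos.le)
      have h2 : Real.sqrt (lam0 y / A0) ^ 2 = lam0 y / A0 :=
        Real.sq_sqrt (div_nonneg (hlam0pos y hy) hA0pos.le)
      rw [Real.norm_eq_abs, abs_of_nonneg (sq_nonneg _)]
      have e1 : (2/A) * lam y = 2 * (lam y / A) := by ring
      have e2 : (2/A0) * lam0 y = 2 * (lam0 y / A0) := by ring
      rw [e1, e2]
      simp only [hf4def]
      have hkey := NH_sub_sq_le (Real.sqrt (lam y / A)) (Real.sqrt (lam0 y / A0))
      rw [h1, h2] at hkey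
      linarith only [hkey]
    have hpt : ∀ᵐ y ∂μ, f4 y ≤ (2/A) * f3 y + (2*(A-A0)^2/(A*A0^2)) * lam0 y := by
      filter_upwards [haeIcc] with y hy
      have := NH_key2 (lam y) (lam0 y) A A0 (hpos y hy) (hlam0pos y hy) hApos hA0pos
      calc f4 y ≤ (2/A)*(Real.sqrt (lam y) - Real.sqrt (lam0 y))^2
            + 2*(lam0 y)*(A-A0)^2/(A*A0^2) := this
        _ = (2/A) * f3 y + (2*(A-A0)^2/(A*A0^2)) * lam0 y := by simp only [hf3def]; ring
    have hIrhs : Integrable (fun y =>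
        (2/A) * f3 y + (2*(A-A0)^2/(A*A0^2)) * lam0 y) μ :=
      (hIf3.const_mul _).add (hIlam0.const_mul _)
    have hmono : (∫ y, f4 y ∂μ) ≤ ∫ y,
        (2/A) * f3 y + (2*(A-A0)^2/(A*A0^2)) * lam0 y ∂μ :=
      integral_mono_ae hIf4 hIrhs hpt
    have hval : (∫ y, (2/A) * f3 y + (2*(A-A0)^2/(A*A0^2)) * lam0 y ∂μ)
        = (2/A) * (∫ y, f3 y ∂μ) + (2*(A-A0)^2/(A*A0^2)) * (∫ y, lam0 y ∂μ) := by
      rw [integral_add (hIf3.const_mul _) (hIlam0.const_mul _),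
        MeasureTheory.integral_const_mul, MeasureTheory.integral_const_mul]
    rw [hval] at hmono
    have hterm1 : (2/A) * (∫ y, f3 y ∂μ) ≤ (4/c1) * (K1 * ε^2) := by
      have h2A : 2/A ≤ 4/c1 := by
        rw [div_le_div_iff₀ hApos (by positivity)]
        linarith only [hAlow]
      have hf3nn : 0 ≤ ∫ y, f3 y ∂μ := integral_nonneg (fun y => sq_nonneg _)
      calc (2/A) * (∫ y, f3 y ∂μ) ≤ (4/c1) * (∫ y, f3 y ∂μ) :=
            mul_le_mul_of_nonneg_right h2A hf3nn
        _ ≤ (4/c1) * (K1 * ε^2) := mul_le_mul_of_nonneg_left hH2 (by positivity)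
    have hterm2 : (2*(A-A0)^2/(A*A0^2)) * (∫ y, lam0 y ∂μ) ≤ (4*c5^2/c1^2) * ε^2 := by
      have hA0eq : (∫ y, lam0 y ∂μ) = A0 := hA0μ.symm
      rw [hA0eq]
      have hAA0 : (A-A0)^2 ≤ c5^2 * ε^2 := by
        have h1 : (A-A0)^2 = |A-A0|^2 := (sq_abs _).symm
        have h2 : |A-A0|^2 ≤ (c5*ε)^2 := pow_le_pow_left₀ (abs_nonneg _) hAdiff 2
        rw [h1]
        calc |A-A0|^2 ≤ (c5*ε)^2 := h2
          _ = c5^2 * ε^2 := by ring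
      have key : 2*(A-A0)^2/(A*A0^2) * A0 = 2*(A-A0)^2/(A*A0) := by
        field_simp
      rw [key, div_le_iff₀ (by positivity : (0:ℝ) < A*A0)]
      have hprod : c1/2 * c1 ≤ A * A0 :=
        mul_le_mul hAlow hA0low hc1.le hApos.le
      have hcoef : (0:ℝ) ≤ 4*c5^2/c1^2 * ε^2 := by positivity
      have hchain : (4*c5^2/c1^2 * ε^2) * (c1/2 * c1) ≤ (4*c5^2/c1^2 * ε^2) * (A * A0) :=
        mul_le_mul_of_nonneg_left hprod hcoef
      have heval : (4*c5^2/c1^2 * ε^2) * (c1/2 * c1) = 2*(c5^2 * ε^2) := by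
        field_simp
        ring
      linarith only [hAA0, hchain, heval]
    calc (∫ y, f4 y ∂μ) ≤ (2/A) * (∫ y, f3 y ∂μ)
          + (2*(A-A0)^2/(A*A0^2)) * (∫ y, lam0 y ∂μ) := hmono
      _ ≤ (4/c1) * (K1 * ε^2) + (4*c5^2/c1^2) * ε^2 := by
          linarith only [hterm1, hterm2]
      _ = (4*K1/c1 + 4*c5^2/c1^2) * ε^2 := by ring
      _ ≤ C * ε^2 := by
          refine mul_le_mul_of_nonneg_right ?_ (sq_nonneg _)
          rw [hCdef]; linarith only [sq_nonneg c5]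
  exact ⟨hHSq, hL1⟩
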